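/- Elementary step of the positive commutator estimate in finite dimensions: let P, Q be self-adjoint matrices (Q ≥ 0), and suppose i[P, Q²] = -B*B + E + hF as matrices. Then for any u with (P - λ)u = f and Im λ ≥ 0: ‖Bu‖² ≤ ⟨Eu, u⟩ + h⟨Fu, u⟩ + 2‖Q²f‖·‖u‖. -/

import Mathlib

theorem positive_commutator_finite_dim
    {H : Type*} [NormedAddCommGroup H] [InnerProductSpace ℂ H] [FiniteDimensional ℂ H]
    (P Q B E F : H →L[ℂ] H)
    (hP : ContinuousLinearMap.adjoint P = P)
    (hQ : ContinuousLinearMap.adjoint Q = Q)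
    (hE : ContinuousLinearMap.adjoint E = E)
    (hF : ContinuousLinearMap.adjoint F = F)
    (h : ℝ) (hh : 0 < h)
    (hid : Complex.I • (P ∘L Q ∘L Q - Q ∘L Q ∘L P)
        = -(ContinuousLinearMap.adjoint B ∘L B) + E + (h:ℂ) • F)
    (lam : ℂ) (hlam : 0 ≤ lam.im)
    (u f : H) (hf : P u - lam • u = f) :
    ‖B u‖^2 ≤ (inner ℂ (E u) u : ℂ).re + h * (inner ℂ (F u) u : ℂ).re
      + 2 * ‖Q (Q f)‖ * ‖u‖ := by
  have sa : ∀ (T : H →L[ℂ] H), ContinuousLinearMap.adjoint T = T →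
      ∀ x y : H, (inner ℂ (T x) y : ℂ) = inner ℂ x (T y) := by
    intro T hT x y
    conv_lhs => rw [← hT]
    exact ContinuousLinearMap.adjoint_inner_left T y x
  have hPu : P u = lam • u + f := by rw [← hf]; abel
  set c : ℂ := inner ℂ (Q (Q f)) u with hc
  have key := congrArg (fun T : H →L[ℂ] H => (inner ℂ (T u) u : ℂ)) hid
  simp only [ContinuousLinearMap.smul_apply, ContinuousLinearMap.sub_apply,
    ContinuousLinearMap.add_apply, ContinuousLinearMap.coe_comp', Function.comp_apply,
    ContinuousLinearMap.neg_apply, inner_smul_left, inner_sub_left,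
    inner_add_left, inner_neg_left] at key
  rw [ContinuousLinearMap.adjoint_inner_left] at key
  have h1 : (inner ℂ (P (Q (Q u))) u : ℂ)
      = lam * ((‖Q u‖:ℂ)^2) + (starRingEnd ℂ) c := by
    rw [sa P hP, hPu, inner_add_right, inner_smul_right, sa Q hQ,
      inner_self_eq_norm_sq_to_K]
    congr 1
    rw [← inner_conj_symm, hc, sa Q hQ, sa Q hQ]
  have h2 : (inner ℂ (Q (Q (P u))) u : ℂ)
      = (starRingEnd ℂ) lam * ((‖Q u‖:ℂ)^2) + c := by
    rw [hPu, map_add, map_add, map_smul, map_smul, inner_add_left, inner_smul_left,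
      sa Q hQ (Q u) u, inner_self_eq_norm_sq_to_K]
    rfl
  rw [h1, h2, inner_self_eq_norm_sq_to_K] at key
  have keyre := congrArg Complex.re key
  simp only [Complex.mul_re, Complex.mul_im, Complex.add_re, Complex.add_im,
    Complex.sub_re, Complex.sub_im, Complex.neg_re, Complex.conj_re, Complex.conj_im,
    Complex.I_re, Complex.I_im, Complex.ofReal_re, Complex.ofReal_im,
    ← Complex.ofReal_pow, Complex.ofReal_re, Complex.ofReal_im] at keyre
  -- keyre should now be a real equation
  have hQu : (0:ℝ) ≤ ‖Q u‖^2 := sq_nonneg _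
  have hcim : c.im ≤ ‖Q (Q f)‖ * ‖u‖ := by
    calc c.im ≤ ‖c‖ := Complex.im_le_norm c
    _ = ‖c‖ := rfl
    _ ≤ ‖Q (Q f)‖ * ‖u‖ := norm_inner_le_norm _ _
  push_cast at keyre
  ring_nf at keyre
  have hB : ((RCLike.ofReal (K := ℂ) ‖B u‖) ^ 2).re = ‖B u‖^2 := by
    have hco : (RCLike.ofReal (K := ℂ) ‖B u‖) = Complex.ofReal ‖B u‖ := rfl
    rw [hco]; simp [← Complex.ofReal_pow]
  nlinarith [keyre, mul_nonneg hlam hQu, hB]
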